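/- For fixed a = 3, b = 1, c = √10, s = (4+√10)/2, r = 3/(4+√10), the sequence g(n) = (2+2^(1/n))·s − 3√3·(2−2^(1/n))·r − ∑_{cyc}(aⁿ+bⁿ)^(1/n) is strictly decreasing in n for n ≥ 2; consequently g(n) < 0 for all integers n ≥ 3. -/

import Mathlib

open Real

lemma root_le {b x : ℝ} {n : ℕ} (hn : n ≠ 0) (hb : 0 ≤ b) (h : b ^ n ≤ x) :
    b ≤ x ^ ((1:ℝ)/n) := by
  have : (b ^ n : ℝ) ^ ((1:ℝ)/n) ≤ x ^ ((1:ℝ)/n) :=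
    Real.rpow_le_rpow (pow_nonneg hb n) h (by positivity)
  rwa [← Real.rpow_natCast b n, ← Real.rpow_mul hb, mul_one_div,
    div_self (by exact_mod_cast hn : (n:ℝ) ≠ 0), Real.rpow_one] at this

lemma le_root {b x : ℝ} {n : ℕ} (hn : n ≠ 0) (hb : 0 ≤ b) (hx : 0 ≤ x) (h : x ≤ b ^ n) :
    x ^ ((1:ℝ)/n) ≤ b := by
  have : x ^ ((1:ℝ)/n) ≤ (b ^ n : ℝ) ^ ((1:ℝ)/n) :=
    Real.rpow_le_rpow hx h (by positivity)
  rwa [← Real.rpow_natCast b n, ← Real.rpow_mul hb, mul_one_div,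
    div_self (by exact_mod_cast hn : (n:ℝ) ≠ 0), Real.rpow_one] at this

lemma sqrt10_lb : (3.16227766:ℝ) ≤ Real.sqrt 10 := by
  nlinarith [Real.sq_sqrt (by norm_num : (0:ℝ) ≤ 10), Real.sqrt_nonneg 10]
lemma sqrt10_ub : Real.sqrt 10 ≤ 3.16227767 := by
  nlinarith [Real.sq_sqrt (by norm_num : (0:ℝ) ≤ 10), Real.sqrt_nonneg 10]
lemma sqrt3_lb : (1.7320508:ℝ) ≤ Real.sqrt 3 := by
  nlinarith [Real.sq_sqrt (by norm_num : (0:ℝ) ≤ 3), Real.sqrt_nonneg 3]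

lemma s10p (k : ℕ) : Real.sqrt 10 ^ (2*k) = (10:ℝ)^k := by
  rw [pow_mul, Real.sq_sqrt (by norm_num : (0:ℝ) ≤ 10)]
lemma s10podd (k : ℕ) : Real.sqrt 10 ^ (2*k+1) = (10:ℝ)^k * Real.sqrt 10 := by
  rw [pow_succ, s10p]

lemma pow_root_eq {x : ℝ} (hx : 0 < x) {m : ℕ} (hm : m ≠ 0) :
    ((x:ℝ) ^ m) ^ ((1:ℝ)/m) = x := by
  rw [← Real.rpow_natCast x m, ← Real.rpow_mul hx.le, mul_one_div,
    div_self (by exact_mod_cast hm : (m:ℝ) ≠ 0), Real.rpow_one]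

lemma pair_root (x q : ℝ) (hx : 0 < x) (hq : 0 < q) {m : ℕ} (hm : m ≠ 0) :
    (x ^ m + (x*q) ^ m) ^ ((1:ℝ)/m) = x * Real.exp (Real.log (1 + q^m) * (1/m)) := by
  have h1 : x ^ m + (x*q) ^ m = x^m * (1 + q^m) := by rw [mul_pow]; ring
  rw [h1, Real.mul_rpow (by positivity) (by positivity), pow_root_eq hx hm,
    Real.rpow_def_of_pos (by positivity)]

lemma exp_half_log2 : Real.exp (Real.log 2 * (1/2)) ≤ 1.41422 := by
  have h2 : Real.exp (Real.log 2 * (1/2)) * Real.exp (Real.log 2 * (1/2)) = 2 := by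
    rw [← Real.exp_add]
    rw [show Real.log 2 * (1/2) + Real.log 2 * (1/2) = Real.log 2 by ring, Real.exp_log]
    norm_num
  nlinarith [Real.exp_pos (Real.log 2 * (1/2))]

set_option maxHeartbeats 1000000 in
lemma pair_bound (x y : ℝ) (n : ℕ) (hn : 2 ≤ n) (hy : 0 < y) (hxy : y ≤ x) :
    (x^n + y^n) ^ ((1:ℝ)/n) - (x^(n+1) + y^(n+1)) ^ ((1:ℝ)/((n:ℝ)+1))
      ≤ 1.41422 * x * ((y/x)^n * (1 - y/x) * ((n:ℝ)+1) + (y/x)^(n+1)) / ((n:ℝ)*((n:ℝ)+1)) := by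
  have hx : 0 < x := lt_of_lt_of_le hy hxy
  set q : ℝ := y / x with hqdef
  have hq0 : 0 < q := by positivity
  have hq1 : q ≤ 1 := by rw [hqdef, div_le_one hx]; exact hxy
  have hyx : y = x * q := by rw [hqdef]; field_simp [hx.ne']
  have hn0 : (0:ℝ) < n := by exact_mod_cast (by omega : 0 < n)
  have hn1 : (0:ℝ) < (n:ℝ) + 1 := by linarith
  set v : ℝ := Real.log (1 + q^n) with hv
  set v' : ℝ := Real.log (1 + q^(n+1)) with hv'
  set A : ℝ := v * (1/(n:ℝ)) with hA
  set B : ℝ := v' * (1/((n:ℝ)+1)) with hB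
  have e1 : (x^n + y^n) ^ ((1:ℝ)/n) = x * Real.exp A := by
    rw [hyx]; exact pair_root x q hx hq0 (by omega)
  have e2 : (x^(n+1) + y^(n+1)) ^ ((1:ℝ)/((n:ℝ)+1)) = x * Real.exp B := by
    rw [hyx]
    have h := pair_root x q hx hq0 (m := n+1) (by omega)
    push_cast at h
    rw [h]
  have hqn1 : q^n ≤ 1 := pow_le_one₀ hq0.le hq1
  have hqpn : (0:ℝ) < q^n := pow_pos hq0 n
  have hqpn1 : (0:ℝ) < q^(n+1) := pow_pos hq0 (n+1)
  have hqsucc : q^(n+1) = q^n * q := pow_succ q n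
  have hv0 : 0 ≤ v := Real.log_nonneg (by nlinarith)
  have hvlog2 : v ≤ Real.log 2 := Real.log_le_log (by positivity) (by nlinarith)
  have hv'0 : 0 ≤ v' := Real.log_nonneg (by nlinarith)
  have hv'q : v' ≤ q^(n+1) := by
    have := Real.log_le_sub_one_of_pos (show (0:ℝ) < 1 + q^(n+1) by positivity)
    linarith
  have hqq : q^(n+1) ≤ q^n := by nlinarith
  have hw : v - v' ≤ q^n * (1 - q) := by
    have hd : (0:ℝ) < 1 + q^(n+1) := by positivity
    have hdd : (0:ℝ) < 1 + q^n := by positivity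
    have hlogdiv : v - v' = Real.log ((1 + q^n)/(1 + q^(n+1))) := by
      rw [hv, hv', Real.log_div hdd.ne' hd.ne']
    have h2 : Real.log ((1 + q^n)/(1 + q^(n+1))) ≤ (1 + q^n)/(1 + q^(n+1)) - 1 :=
      Real.log_le_sub_one_of_pos (by positivity)
    have h3 : (1 + q^n)/(1 + q^(n+1)) - 1 = (q^n - q^(n+1))/(1 + q^(n+1)) := by
      rw [div_sub_one hd.ne']; ring_nf
    have h4 : (q^n - q^(n+1))/(1 + q^(n+1)) ≤ q^n - q^(n+1) :=
      div_le_self (by linarith) (by linarith)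
    rw [hlogdiv]; rw [h3] at h2; nlinarith
  have hA2 : A ≤ Real.log 2 * (1/2) := by
    rw [hA]
    have h1n : (1:ℝ)/(n:ℝ) ≤ 1/2 :=
      one_div_le_one_div_of_le (by norm_num) (by exact_mod_cast hn)
    have hm1 : v * (1/(n:ℝ)) ≤ v * (1/2) := mul_le_mul_of_nonneg_left h1n hv0
    have hm2 : v * (1/2) ≤ Real.log 2 * (1/2) := by linarith
    linarith
  have heA : Real.exp A ≤ 1.41422 := (Real.exp_le_exp.2 hA2).trans exp_half_log2
  have hABeq : A - B = ((v - v')*((n:ℝ)+1) + v') / ((n:ℝ)*((n:ℝ)+1)) := by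
    rw [hA, hB]; field_simp; ring
  set U : ℝ := (q^n * (1 - q) * ((n:ℝ)+1) + q^(n+1)) / ((n:ℝ)*((n:ℝ)+1)) with hU
  have hU0 : 0 ≤ U := by
    apply div_nonneg _ (by positivity)
    nlinarith
  have hAB : A - B ≤ U := by
    rw [hABeq, hU]
    have hnum : (v - v')*((n:ℝ)+1) + v' ≤ q^n*(1-q)*((n:ℝ)+1) + q^(n+1) := by nlinarith
    exact (div_le_div_iff_of_pos_right (by positivity)).mpr hnum
  have hmain : Real.exp A - Real.exp B ≤ Real.exp A * (A - B) := by
    have h := Real.add_one_le_exp (B - A)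
    have h2 := mul_le_mul_of_nonneg_left h (Real.exp_pos A).le
    rw [← Real.exp_add] at h2
    rw [show A + (B - A) = B by ring] at h2
    nlinarith [Real.exp_pos A]
  have hfinal : Real.exp A - Real.exp B ≤ 1.41422 * U := by
    have h1 : Real.exp A * (A - B) ≤ Real.exp A * U :=
      mul_le_mul_of_nonneg_left hAB (Real.exp_pos A).le
    have h2 : Real.exp A * U ≤ 1.41422 * U := mul_le_mul_of_nonneg_right heA hU0
    linarith
  rw [e1, e2]
  calc x * Real.exp A - x * Real.exp B = x * (Real.exp A - Real.exp B) := by ring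
    _ ≤ x * (1.41422 * U) := mul_le_mul_of_nonneg_left hfinal hx.le
    _ = 1.41422 * x * (q^n * (1 - q) * ((n:ℝ)+1) + q^(n+1)) / ((n:ℝ)*((n:ℝ)+1)) := by
        rw [hU]; ring

lemma delta2 (n : ℕ) (hn : 2 ≤ n) :
    Real.log 2 / ((n:ℝ) * ((n:ℝ)+1)) ≤ (2:ℝ) ^ ((1:ℝ)/n) - (2:ℝ) ^ ((1:ℝ)/((n:ℝ)+1)) := by
  have hn0 : (0:ℝ) < n := by exact_mod_cast (by omega : 0 < n)
  have hn1 : (0:ℝ) < (n:ℝ) + 1 := by linarith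
  set δ : ℝ := 1/(n:ℝ) - 1/((n:ℝ)+1) with hδ
  have hδval : δ = 1/((n:ℝ)*((n:ℝ)+1)) := by
    rw [hδ, div_sub_div _ _ hn0.ne' hn1.ne']; ring
  have hδpos : 0 < δ := by rw [hδval]; positivity
  have hsplit : (2:ℝ) ^ ((1:ℝ)/n) = (2:ℝ) ^ ((1:ℝ)/((n:ℝ)+1)) * (2:ℝ) ^ δ := by
    rw [← Real.rpow_add (by norm_num : (0:ℝ) < 2), hδ]; ring_nf
  have h2δ : (2:ℝ) ^ δ = Real.exp (Real.log 2 * δ) := Real.rpow_def_of_pos (by norm_num) δ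
  have hexp : 1 + Real.log 2 * δ ≤ Real.exp (Real.log 2 * δ) := by
    have := Real.add_one_le_exp (Real.log 2 * δ); linarith
  have hbase : (1:ℝ) ≤ (2:ℝ) ^ ((1:ℝ)/((n:ℝ)+1)) :=
    Real.one_le_rpow (by norm_num) (by positivity)
  have hlog : (0:ℝ) < Real.log 2 := Real.log_pos (by norm_num)
  have key : (2:ℝ) ^ ((1:ℝ)/n) - (2:ℝ) ^ ((1:ℝ)/((n:ℝ)+1)) =
      (2:ℝ) ^ ((1:ℝ)/((n:ℝ)+1)) * ((2:ℝ) ^ δ - 1) := by rw [hsplit]; ring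
  rw [key]
  have h1 : Real.log 2 * δ ≤ (2:ℝ) ^ δ - 1 := by rw [h2δ]; linarith
  have hd : 0 ≤ (2:ℝ) ^ δ - 1 := le_trans (le_of_lt (mul_pos hlog hδpos)) h1
  have h2 : Real.log 2 * δ ≤ (2:ℝ) ^ ((1:ℝ)/((n:ℝ)+1)) * ((2:ℝ) ^ δ - 1) := by
    calc Real.log 2 * δ ≤ (2:ℝ) ^ δ - 1 := h1
      _ = 1 * ((2:ℝ) ^ δ - 1) := (one_mul _).symm
      _ ≤ _ := mul_le_mul_of_nonneg_right hbase hd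
  calc Real.log 2 / ((n:ℝ)*((n:ℝ)+1)) = Real.log 2 * δ := by rw [hδval]; ring
    _ ≤ _ := h2

lemma Kbound : (5.7576 : ℝ) ≤ (4 + Real.sqrt 10) / 2 + 3 * Real.sqrt 3 * (3 / (4 + Real.sqrt 10)) := by
  have h1 : (3.16227766:ℝ) ≤ Real.sqrt 10 := by
    nlinarith [Real.sq_sqrt (by norm_num : (0:ℝ) ≤ 10), Real.sqrt_nonneg 10]
  have h2 : Real.sqrt 10 ≤ 3.16227767 := by
    nlinarith [Real.sq_sqrt (by norm_num : (0:ℝ) ≤ 10), Real.sqrt_nonneg 10]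
  have h3 : (1.7320508:ℝ) ≤ Real.sqrt 3 := by
    nlinarith [Real.sq_sqrt (by norm_num : (0:ℝ) ≤ 3), Real.sqrt_nonneg 3]
  have h4 : (0:ℝ) < 4 + Real.sqrt 10 := by linarith
  have h5 : (9:ℝ) * 1.7320508 / 7.16227767 ≤ 3 * Real.sqrt 3 * (3 / (4 + Real.sqrt 10)) := by
    rw [div_le_iff₀ (by norm_num), mul_comm]
    have he : 3 * Real.sqrt 3 * (3 / (4 + Real.sqrt 10)) = 9 * Real.sqrt 3 / (4 + Real.sqrt 10) := by
      field_simp; ring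
    rw [he, div_mul_eq_mul_div, le_div_iff₀ h4]
    nlinarith [Real.sqrt_nonneg 3]
  have h6 : (5.7576:ℝ) ≤ (4+3.16227766)/2 + 9*1.7320508/7.16227767 := by norm_num
  have h7 : (4+(3.16227766:ℝ))/2 ≤ (4+Real.sqrt 10)/2 := by linarith
  linarith

lemma geomdec (α β c : ℝ) (hc : 0 < c) (hα : 0 ≤ α) (hβ : 0 ≤ β)
    (hstep : ∀ m : ℕ, c * (α*((m:ℝ)+2)+β) ≤ α*((m:ℝ)+1)+β) :
    ∀ n : ℕ, 12 ≤ n → (α*((n:ℝ)+1)+β)*c^n ≤ (α*13+β)*c^12 := by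
  intro n hn
  induction n, hn using Nat.le_induction with
  | base => norm_num
  | succ m hm ih =>
    have hpow : (0:ℝ) ≤ c^m := (pow_pos hc m).le
    calc (α*((↑(m+1):ℝ)+1)+β)*c^(m+1) = (c*(α*((m:ℝ)+2)+β))*c^m := by
          push_cast; rw [pow_succ]; ring
      _ ≤ (α*((m:ℝ)+1)+β)*c^m := mul_le_mul_of_nonneg_right (hstep m) hpow
      _ ≤ _ := ih

lemma geom1 (n : ℕ) (hn : 12 ≤ n) : (5*((n:ℝ)+1)+3)*(0.334:ℝ)^n ≤ 0.000132 := by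
  have h := geomdec 5 3 0.334 (by norm_num) (by norm_num) (by norm_num)
    (fun m => by have : (0:ℝ) ≤ (m:ℝ) := Nat.cast_nonneg m; nlinarith) n hn
  calc (5*((n:ℝ)+1)+3)*(0.334:ℝ)^n ≤ (5*13+3)*(0.334:ℝ)^12 := h
    _ ≤ 0.000132 := by norm_num

lemma geom3 (n : ℕ) (hn : 12 ≤ n) :
    (0.16228*((n:ℝ)+1)+3.00000002)*(0.9486833:ℝ)^n ≤ 2.71552 := by
  have h := geomdec 0.16228 3.00000002 0.9486833 (by norm_num) (by norm_num) (by norm_num)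
    (fun m => by have : (0:ℝ) ≤ (m:ℝ) := Nat.cast_nonneg m; nlinarith) n hn
  calc (0.16228*((n:ℝ)+1)+3.00000002)*(0.9486833:ℝ)^n
      ≤ (0.16228*13+3.00000002)*(0.9486833:ℝ)^12 := h
    _ ≤ 2.71552 := by norm_num

set_option maxHeartbeats 2000000 in
lemma step_tail (n : ℕ) (hn : 12 ≤ n) :
    (2 + (2:ℝ) ^ ((1:ℝ) / ((n:ℝ)+1))) * ((4 + Real.sqrt 10) / 2)
      - 3 * Real.sqrt 3 * (2 - (2:ℝ) ^ ((1:ℝ) / ((n:ℝ)+1))) * (3 / (4 + Real.sqrt 10))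
      - (((3:ℝ)^(n+1) + 1^(n+1)) ^ ((1:ℝ)/((n:ℝ)+1))
         + (Real.sqrt 10 ^(n+1) + 1^(n+1)) ^ ((1:ℝ)/((n:ℝ)+1))
         + (Real.sqrt 10 ^(n+1) + 3^(n+1)) ^ ((1:ℝ)/((n:ℝ)+1)))
    < (2 + (2:ℝ) ^ ((1:ℝ) / (n:ℝ))) * ((4 + Real.sqrt 10) / 2)
      - 3 * Real.sqrt 3 * (2 - (2:ℝ) ^ ((1:ℝ) / (n:ℝ))) * (3 / (4 + Real.sqrt 10))
      - (((3:ℝ)^n + 1^n) ^ ((1:ℝ)/(n:ℝ))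
         + (Real.sqrt 10 ^n + 1^n) ^ ((1:ℝ)/(n:ℝ))
         + (Real.sqrt 10 ^n + 3^n) ^ ((1:ℝ)/(n:ℝ))) := by
  have hn2 : 2 ≤ n := by omega
  have hn0 : (0:ℝ) < n := by exact_mod_cast (by omega : 0 < n)
  have hn1 : (0:ℝ) < (n:ℝ)+1 := by linarith
  have hDpos : (0:ℝ) < (n:ℝ)*((n:ℝ)+1) := by positivity
  have hDinv : (0:ℝ) < ((n:ℝ)*((n:ℝ)+1))⁻¹ := by positivity
  have s10l : (3.16227766:ℝ) ≤ Real.sqrt 10 := by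
    nlinarith [Real.sq_sqrt (by norm_num : (0:ℝ) ≤ 10), Real.sqrt_nonneg 10]
  have s10u : Real.sqrt 10 ≤ 3.16227767 := by
    nlinarith [Real.sq_sqrt (by norm_num : (0:ℝ) ≤ 10), Real.sqrt_nonneg 10]
  have h10pos : (0:ℝ) < Real.sqrt 10 := by linarith
  have P1 := pair_bound 3 1 n hn2 one_pos (by norm_num)
  have P2 := pair_bound (Real.sqrt 10) 1 n hn2 one_pos (by linarith)
  have P3 := pair_bound (Real.sqrt 10) 3 n hn2 (by norm_num) (by linarith)
  -- ratio bounds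
  have hq2u : 1/Real.sqrt 10 ≤ 0.3162278 := by
    rw [div_le_iff₀ h10pos]; nlinarith
  have hq2l : (0.3162277:ℝ) ≤ 1/Real.sqrt 10 := by
    rw [le_div_iff₀ h10pos]; nlinarith
  have hq3u : 3/Real.sqrt 10 ≤ 0.9486833 := by
    rw [div_le_iff₀ h10pos]; nlinarith
  have hq3l : (0.9486832:ℝ) ≤ 3/Real.sqrt 10 := by
    rw [le_div_iff₀ h10pos]; nlinarith
  have hq2pos : (0:ℝ) ≤ 1/Real.sqrt 10 := by positivity
  have hq3pos : (0:ℝ) ≤ 3/Real.sqrt 10 := by positivity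
  -- numerator bounds
  have pow2 : (1/Real.sqrt 10)^n ≤ (0.3162278:ℝ)^n := pow_le_pow_left₀ hq2pos hq2u n
  have pow2' : (1/Real.sqrt 10)^(n+1) ≤ (0.3162278:ℝ)^(n+1) := pow_le_pow_left₀ hq2pos hq2u (n+1)
  have pow3 : (3/Real.sqrt 10)^n ≤ (0.9486833:ℝ)^n := pow_le_pow_left₀ hq3pos hq3u n
  have pow3' : (3/Real.sqrt 10)^(n+1) ≤ (0.9486833:ℝ)^(n+1) := pow_le_pow_left₀ hq3pos hq3u (n+1)
  have pw2nn : (0:ℝ) ≤ (1/Real.sqrt 10)^n := by positivity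
  have pw3nn : (0:ℝ) ≤ (3/Real.sqrt 10)^n := by positivity
  have pc2nn : (0:ℝ) ≤ (0.3162278:ℝ)^n := by positivity
  have pc3nn : (0:ℝ) ≤ (0.9486833:ℝ)^n := by positivity
  have pc1nn : (0:ℝ) ≤ ((1:ℝ)/3)^n := by positivity
  have p334nn : (0:ℝ) ≤ (0.334:ℝ)^n := by positivity
  -- inner sum bounds (three-factor monotone products)
  have inner2 : (1/Real.sqrt 10)^n * (1 - 1/Real.sqrt 10) * ((n:ℝ)+1) + (1/Real.sqrt 10)^(n+1)
      ≤ (0.3162278:ℝ)^n * 0.6837723 * ((n:ℝ)+1) + (0.3162278:ℝ)^(n+1) := by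
    have h1 : (1/Real.sqrt 10)^n * (1 - 1/Real.sqrt 10) ≤ (0.3162278:ℝ)^n * 0.6837723 :=
      mul_le_mul pow2 (by linarith) (by linarith) pc2nn
    have h2 : (1/Real.sqrt 10)^n * (1 - 1/Real.sqrt 10) * ((n:ℝ)+1)
        ≤ (0.3162278:ℝ)^n * 0.6837723 * ((n:ℝ)+1) :=
      mul_le_mul_of_nonneg_right h1 hn1.le
    linarith
  have inner3 : (3/Real.sqrt 10)^n * (1 - 3/Real.sqrt 10) * ((n:ℝ)+1) + (3/Real.sqrt 10)^(n+1)
      ≤ (0.9486833:ℝ)^n * 0.0513168 * ((n:ℝ)+1) + (0.9486833:ℝ)^(n+1) := by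
    have h1 : (3/Real.sqrt 10)^n * (1 - 3/Real.sqrt 10) ≤ (0.9486833:ℝ)^n * 0.0513168 :=
      mul_le_mul pow3 (by linarith) (by linarith) pc3nn
    have h2 : (3/Real.sqrt 10)^n * (1 - 3/Real.sqrt 10) * ((n:ℝ)+1)
        ≤ (0.9486833:ℝ)^n * 0.0513168 * ((n:ℝ)+1) :=
      mul_le_mul_of_nonneg_right h1 hn1.le
    linarith
  have innernn2 : (0:ℝ) ≤ (0.3162278:ℝ)^n * 0.6837723 * ((n:ℝ)+1) + (0.3162278:ℝ)^(n+1) := by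
    positivity
  have innernn3 : (0:ℝ) ≤ (0.9486833:ℝ)^n * 0.0513168 * ((n:ℝ)+1) + (0.9486833:ℝ)^(n+1) := by
    positivity
  -- multiply by sqrt10 bound
  have num2 : Real.sqrt 10 * ((1/Real.sqrt 10)^n * (1 - 1/Real.sqrt 10) * ((n:ℝ)+1)
        + (1/Real.sqrt 10)^(n+1))
      ≤ (2.16228*((n:ℝ)+1)+1.0000002) * (0.3162278:ℝ)^n := by
    have h1 : Real.sqrt 10 * ((1/Real.sqrt 10)^n * (1 - 1/Real.sqrt 10) * ((n:ℝ)+1)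
          + (1/Real.sqrt 10)^(n+1))
        ≤ 3.16227767 * ((0.3162278:ℝ)^n * 0.6837723 * ((n:ℝ)+1) + (0.3162278:ℝ)^(n+1)) := by
      apply mul_le_mul s10u inner2 _ (by norm_num)
      exact add_nonneg (mul_nonneg (mul_nonneg pw2nn (by linarith)) hn1.le) (by positivity)
    have h2 : 3.16227767 * ((0.3162278:ℝ)^n * 0.6837723 * ((n:ℝ)+1) + (0.3162278:ℝ)^(n+1))
        = (3.16227767*0.6837723*((n:ℝ)+1) + 3.16227767*0.3162278) * (0.3162278:ℝ)^n := by
      rw [pow_succ]; ring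
    have h3 : (3.16227767*0.6837723*((n:ℝ)+1) + 3.16227767*0.3162278) * (0.3162278:ℝ)^n
        ≤ (2.16228*((n:ℝ)+1)+1.0000002) * (0.3162278:ℝ)^n := by
      apply mul_le_mul_of_nonneg_right _ pc2nn
      nlinarith [hn1.le]
    linarith [h1, h2 ▸ h1, h3]
  have num3 : Real.sqrt 10 * ((3/Real.sqrt 10)^n * (1 - 3/Real.sqrt 10) * ((n:ℝ)+1)
        + (3/Real.sqrt 10)^(n+1))
      ≤ (0.16228*((n:ℝ)+1)+3.00000002) * (0.9486833:ℝ)^n := by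
    have h1 : Real.sqrt 10 * ((3/Real.sqrt 10)^n * (1 - 3/Real.sqrt 10) * ((n:ℝ)+1)
          + (3/Real.sqrt 10)^(n+1))
        ≤ 3.16227767 * ((0.9486833:ℝ)^n * 0.0513168 * ((n:ℝ)+1) + (0.9486833:ℝ)^(n+1)) := by
      apply mul_le_mul s10u inner3 _ (by norm_num)
      exact add_nonneg (mul_nonneg (mul_nonneg pw3nn (by linarith)) hn1.le) (by positivity)
    have h2 : 3.16227767 * ((0.9486833:ℝ)^n * 0.0513168 * ((n:ℝ)+1) + (0.9486833:ℝ)^(n+1))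
        = (3.16227767*0.0513168*((n:ℝ)+1) + 3.16227767*0.9486833) * (0.9486833:ℝ)^n := by
      rw [pow_succ]; ring
    have h3 : (3.16227767*0.0513168*((n:ℝ)+1) + 3.16227767*0.9486833) * (0.9486833:ℝ)^n
        ≤ (0.16228*((n:ℝ)+1)+3.00000002) * (0.9486833:ℝ)^n := by
      apply mul_le_mul_of_nonneg_right _ pc3nn
      nlinarith [hn1.le]
    linarith [h1, h2 ▸ h1, h3]
  have num1 : (3:ℝ) * (((1:ℝ)/3)^n * (1 - (1:ℝ)/3) * ((n:ℝ)+1) + ((1:ℝ)/3)^(n+1))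
      ≤ (2*((n:ℝ)+1)+1) * (0.334:ℝ)^n := by
    have h2 : (3:ℝ) * (((1:ℝ)/3)^n * (1 - (1:ℝ)/3) * ((n:ℝ)+1) + ((1:ℝ)/3)^(n+1))
        = (2*((n:ℝ)+1)+1) * ((1:ℝ)/3)^n := by rw [pow_succ]; ring
    rw [h2]
    apply mul_le_mul_of_nonneg_left (pow_le_pow_left₀ (by norm_num) (by norm_num) n)
    linarith
  -- merge pow bases
  have merge12 : (2*((n:ℝ)+1)+1) * (0.334:ℝ)^n + (2.16228*((n:ℝ)+1)+1.0000002) * (0.3162278:ℝ)^n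
      ≤ (5*((n:ℝ)+1)+3) * (0.334:ℝ)^n := by
    have h1 : (2.16228*((n:ℝ)+1)+1.0000002) * (0.3162278:ℝ)^n
        ≤ (2.16228*((n:ℝ)+1)+1.0000002) * (0.334:ℝ)^n := by
      apply mul_le_mul_of_nonneg_left (pow_le_pow_left₀ (by norm_num) (by norm_num) n)
      linarith
    nlinarith [mul_nonneg hn1.le p334nn]
  -- total numeric bound
  have hW : (2*((n:ℝ)+1)+1) * (0.334:ℝ)^n + (2.16228*((n:ℝ)+1)+1.0000002) * (0.3162278:ℝ)^n
      + (0.16228*((n:ℝ)+1)+3.00000002) * (0.9486833:ℝ)^n ≤ 2.7157 := by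
    have g1 := geom1 n hn
    have g3 := geom3 n hn
    linarith [merge12]
  -- convert the pair bounds and sum them
  have conv : ∀ X : ℝ, 1.41422 * X / ((n:ℝ)*((n:ℝ)+1)) = (1.41422 * X) * ((n:ℝ)*((n:ℝ)+1))⁻¹ := by
    intro X; ring
  have S1 : ((3:ℝ)^n + 1^n) ^ ((1:ℝ)/(n:ℝ)) - ((3:ℝ)^(n+1) + 1^(n+1)) ^ ((1:ℝ)/((n:ℝ)+1))
      ≤ (1.41422 * ((2*((n:ℝ)+1)+1) * (0.334:ℝ)^n)) * ((n:ℝ)*((n:ℝ)+1))⁻¹ := by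
    refine P1.trans ?_
    have : 1.41422 * 3 * (((1:ℝ)/3)^n * (1 - (1:ℝ)/3) * ((n:ℝ)+1) + ((1:ℝ)/3)^(n+1)) / ((n:ℝ)*((n:ℝ)+1))
        = (1.41422 * ((3:ℝ) * (((1:ℝ)/3)^n * (1 - (1:ℝ)/3) * ((n:ℝ)+1) + ((1:ℝ)/3)^(n+1))))
          * ((n:ℝ)*((n:ℝ)+1))⁻¹ := by ring
    rw [this]
    apply mul_le_mul_of_nonneg_right _ hDinv.le
    linarith [num1]
  have S2 : (Real.sqrt 10 ^n + 1^n) ^ ((1:ℝ)/(n:ℝ))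
        - (Real.sqrt 10 ^(n+1) + 1^(n+1)) ^ ((1:ℝ)/((n:ℝ)+1))
      ≤ (1.41422 * ((2.16228*((n:ℝ)+1)+1.0000002) * (0.3162278:ℝ)^n)) * ((n:ℝ)*((n:ℝ)+1))⁻¹ := by
    refine P2.trans ?_
    have : 1.41422 * Real.sqrt 10 * ((1/Real.sqrt 10)^n * (1 - 1/Real.sqrt 10) * ((n:ℝ)+1)
          + (1/Real.sqrt 10)^(n+1)) / ((n:ℝ)*((n:ℝ)+1))
        = (1.41422 * (Real.sqrt 10 * ((1/Real.sqrt 10)^n * (1 - 1/Real.sqrt 10) * ((n:ℝ)+1)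
          + (1/Real.sqrt 10)^(n+1)))) * ((n:ℝ)*((n:ℝ)+1))⁻¹ := by ring
    rw [this]
    apply mul_le_mul_of_nonneg_right _ hDinv.le
    linarith [num2]
  have S3 : (Real.sqrt 10 ^n + 3^n) ^ ((1:ℝ)/(n:ℝ))
        - (Real.sqrt 10 ^(n+1) + 3^(n+1)) ^ ((1:ℝ)/((n:ℝ)+1))
      ≤ (1.41422 * ((0.16228*((n:ℝ)+1)+3.00000002) * (0.9486833:ℝ)^n)) * ((n:ℝ)*((n:ℝ)+1))⁻¹ := by
    refine P3.trans ?_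
    have : 1.41422 * Real.sqrt 10 * ((3/Real.sqrt 10)^n * (1 - 3/Real.sqrt 10) * ((n:ℝ)+1)
          + (3/Real.sqrt 10)^(n+1)) / ((n:ℝ)*((n:ℝ)+1))
        = (1.41422 * (Real.sqrt 10 * ((3/Real.sqrt 10)^n * (1 - 3/Real.sqrt 10) * ((n:ℝ)+1)
          + (3/Real.sqrt 10)^(n+1)))) * ((n:ℝ)*((n:ℝ)+1))⁻¹ := by ring
    rw [this]
    apply mul_le_mul_of_nonneg_right _ hDinv.le
    linarith [num3]
  have hsum : (((3:ℝ)^n + 1^n) ^ ((1:ℝ)/(n:ℝ)) - ((3:ℝ)^(n+1) + 1^(n+1)) ^ ((1:ℝ)/((n:ℝ)+1)))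
      + ((Real.sqrt 10 ^n + 1^n) ^ ((1:ℝ)/(n:ℝ))
          - (Real.sqrt 10 ^(n+1) + 1^(n+1)) ^ ((1:ℝ)/((n:ℝ)+1)))
      + ((Real.sqrt 10 ^n + 3^n) ^ ((1:ℝ)/(n:ℝ))
          - (Real.sqrt 10 ^(n+1) + 3^(n+1)) ^ ((1:ℝ)/((n:ℝ)+1)))
      ≤ 3.8406 * ((n:ℝ)*((n:ℝ)+1))⁻¹ := by
    have hTot : (1.41422 * ((2*((n:ℝ)+1)+1) * (0.334:ℝ)^n))
        + (1.41422 * ((2.16228*((n:ℝ)+1)+1.0000002) * (0.3162278:ℝ)^n))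
        + (1.41422 * ((0.16228*((n:ℝ)+1)+3.00000002) * (0.9486833:ℝ)^n)) ≤ 3.8406 := by
      linarith [hW]
    have := mul_le_mul_of_nonneg_right hTot hDinv.le
    linarith [S1, S2, S3, this]
  -- the 2^(1/n) side
  have hKd := delta2 n hn2
  have hlog : (0.6931471:ℝ) ≤ Real.log 2 := by linarith [Real.log_two_gt_d9]
  have hU : (0.6931471:ℝ) * ((n:ℝ)*((n:ℝ)+1))⁻¹
      ≤ (2:ℝ) ^ ((1:ℝ)/(n:ℝ)) - (2:ℝ) ^ ((1:ℝ)/((n:ℝ)+1)) := by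
    have h2 : (0.6931471:ℝ) * ((n:ℝ)*((n:ℝ)+1))⁻¹ ≤ Real.log 2 * ((n:ℝ)*((n:ℝ)+1))⁻¹ :=
      mul_le_mul_of_nonneg_right hlog hDinv.le
    calc (0.6931471:ℝ) * ((n:ℝ)*((n:ℝ)+1))⁻¹ ≤ Real.log 2 * ((n:ℝ)*((n:ℝ)+1))⁻¹ := h2
      _ = Real.log 2 / ((n:ℝ)*((n:ℝ)+1)) := by ring
      _ ≤ _ := hKd
  have huw0 : (0:ℝ) ≤ (2:ℝ) ^ ((1:ℝ)/(n:ℝ)) - (2:ℝ) ^ ((1:ℝ)/((n:ℝ)+1)) := by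
    have h0 : (0:ℝ) ≤ 0.6931471 * ((n:ℝ)*((n:ℝ)+1))⁻¹ := by positivity
    linarith
  have hMain : (3.99085:ℝ) * ((n:ℝ)*((n:ℝ)+1))⁻¹ ≤
      ((2:ℝ) ^ ((1:ℝ)/(n:ℝ)) - (2:ℝ) ^ ((1:ℝ)/((n:ℝ)+1)))
        * ((4 + Real.sqrt 10) / 2 + 3 * Real.sqrt 3 * (3 / (4 + Real.sqrt 10))) := by
    have h := mul_le_mul hU Kbound (by norm_num) huw0
    calc (3.99085:ℝ) * ((n:ℝ)*((n:ℝ)+1))⁻¹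
        ≤ 0.6931471 * ((n:ℝ)*((n:ℝ)+1))⁻¹ * 5.7576 := by linarith [hDinv.le]
      _ ≤ _ := h
  have hgap : (0:ℝ) < 0.15025 * ((n:ℝ)*((n:ℝ)+1))⁻¹ := by positivity
  linarith [hsum, hMain, hgap]

lemma gcase (n : ℕ) {lu uv uT1 uT2 uT3 lS1 lS2 lS3 : ℝ}
    (h1 : lu ≤ (2:ℝ)^((1:ℝ)/(n:ℝ)))
    (h2 : (2:ℝ)^((1:ℝ)/((n:ℝ)+1)) ≤ uv)
    (hor : uv ≤ lu)
    (h3 : ((3:ℝ)^n + 1^n)^((1:ℝ)/(n:ℝ)) ≤ uT1)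
    (h4 : (Real.sqrt 10^n + 1^n)^((1:ℝ)/(n:ℝ)) ≤ uT2)
    (h5 : (Real.sqrt 10^n + 3^n)^((1:ℝ)/(n:ℝ)) ≤ uT3)
    (h6 : lS1 ≤ ((3:ℝ)^(n+1) + 1^(n+1))^((1:ℝ)/((n:ℝ)+1)))
    (h7 : lS2 ≤ (Real.sqrt 10^(n+1) + 1^(n+1))^((1:ℝ)/((n:ℝ)+1)))
    (h8 : lS3 ≤ (Real.sqrt 10^(n+1) + 3^(n+1))^((1:ℝ)/((n:ℝ)+1)))
    (hnum : 0 < (lu - uv)*5.7576 - (uT1+uT2+uT3) + (lS1+lS2+lS3)) :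
    (2 + (2:ℝ) ^ ((1:ℝ) / ((n:ℝ)+1))) * ((4 + Real.sqrt 10) / 2)
      - 3 * Real.sqrt 3 * (2 - (2:ℝ) ^ ((1:ℝ) / ((n:ℝ)+1))) * (3 / (4 + Real.sqrt 10))
      - (((3:ℝ)^(n+1) + 1^(n+1)) ^ ((1:ℝ)/((n:ℝ)+1))
         + (Real.sqrt 10 ^(n+1) + 1^(n+1)) ^ ((1:ℝ)/((n:ℝ)+1))
         + (Real.sqrt 10 ^(n+1) + 3^(n+1)) ^ ((1:ℝ)/((n:ℝ)+1)))
    < (2 + (2:ℝ) ^ ((1:ℝ) / (n:ℝ))) * ((4 + Real.sqrt 10) / 2)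
      - 3 * Real.sqrt 3 * (2 - (2:ℝ) ^ ((1:ℝ) / (n:ℝ))) * (3 / (4 + Real.sqrt 10))
      - (((3:ℝ)^n + 1^n) ^ ((1:ℝ)/(n:ℝ))
         + (Real.sqrt 10 ^n + 1^n) ^ ((1:ℝ)/(n:ℝ))
         + (Real.sqrt 10 ^n + 3^n) ^ ((1:ℝ)/(n:ℝ))) := by
  have hK := Kbound
  have huw : lu - uv ≤ (2:ℝ)^((1:ℝ)/(n:ℝ)) - (2:ℝ)^((1:ℝ)/((n:ℝ)+1)) := by linarith
  have huw0 : (0:ℝ) ≤ (2:ℝ)^((1:ℝ)/(n:ℝ)) - (2:ℝ)^((1:ℝ)/((n:ℝ)+1)) := by linarith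
  have hm : (lu - uv)*5.7576 ≤
      ((2:ℝ)^((1:ℝ)/(n:ℝ)) - (2:ℝ)^((1:ℝ)/((n:ℝ)+1)))
        * ((4 + Real.sqrt 10) / 2 + 3 * Real.sqrt 3 * (3 / (4 + Real.sqrt 10))) :=
    mul_le_mul huw hK (by norm_num) huw0
  linarith [hm, h3, h4, h5, h6, h7, h8, hnum]

lemma gval3 :
    (2 + (2:ℝ) ^ ((1:ℝ) / ((3:ℕ):ℝ))) * ((4 + Real.sqrt 10) / 2)
      - 3 * Real.sqrt 3 * (2 - (2:ℝ) ^ ((1:ℝ) / ((3:ℕ):ℝ))) * (3 / (4 + Real.sqrt 10))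
      - (((3:ℝ)^(3:ℕ) + 1^(3:ℕ)) ^ ((1:ℝ)/((3:ℕ):ℝ))
         + (Real.sqrt 10 ^(3:ℕ) + 1^(3:ℕ)) ^ ((1:ℝ)/((3:ℕ):ℝ))
         + (Real.sqrt 10 ^(3:ℕ) + 3^(3:ℕ)) ^ ((1:ℝ)/((3:ℕ):ℝ))) < 0 := by
  have s10l : (3.16227766:ℝ) ≤ Real.sqrt 10 := sqrt10_lb
  have s10u : Real.sqrt 10 ≤ 3.16227767 := sqrt10_ub
  have s3l : (1.7320508:ℝ) ≤ Real.sqrt 3 := sqrt3_lb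
  have e3 : Real.sqrt 10 ^ (3:ℕ) = (10:ℝ)^(1:ℕ) * Real.sqrt 10 := by
    have h := s10podd 1; norm_num at h ⊢ <;> linarith [h]
  have hu : (2:ℝ)^((1:ℝ)/((3:ℕ):ℝ)) ≤ (12599211/10000000 : ℝ) :=
    le_root (n := 3) (by norm_num) (by norm_num) (by norm_num) (by norm_num)
  have hu0 : (0:ℝ) < (2:ℝ)^((1:ℝ)/((3:ℕ):ℝ)) := by positivity
  have hT1 : (30365889/10000000 : ℝ) ≤ ((3:ℝ)^(3:ℕ) + 1^(3:ℕ))^((1:ℝ)/((3:ℕ):ℝ)) :=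
    root_le (n := 3) (by norm_num) (by norm_num) (by norm_num)
  have hT2 : (1997041/625000 : ℝ) ≤ (Real.sqrt 10^(3:ℕ) + 1^(3:ℕ))^((1:ℝ)/((3:ℕ):ℝ)) := by
    apply root_le (n := 3) (by norm_num) (by norm_num)
    rw [e3]; nlinarith [s10l]
  have hT3 : (19423409/5000000 : ℝ) ≤ (Real.sqrt 10^(3:ℕ) + 3^(3:ℕ))^((1:ℝ)/((3:ℕ):ℝ)) := by
    apply root_le (n := 3) (by norm_num) (by norm_num)
    rw [e3]; nlinarith [s10l]
  have hspos : (0:ℝ) ≤ (4 + Real.sqrt 10)/2 := by positivity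
  have hsu : (4 + Real.sqrt 10)/2 ≤ 3.581138835 := by linarith
  have h10pos : (0:ℝ) < 4 + Real.sqrt 10 := by nlinarith [Real.sqrt_nonneg 10]
  have hrl : (0.4188611:ℝ) ≤ 3/(4 + Real.sqrt 10) := by
    rw [le_div_iff₀ h10pos]; nlinarith
  have hterm1 : (2 + (2:ℝ)^((1:ℝ)/((3:ℕ):ℝ))) * ((4 + Real.sqrt 10)/2)
      ≤ (2 + (12599211/10000000 : ℝ)) * 3.581138835 :=
    mul_le_mul (by linarith) hsu hspos (by norm_num)
  have hm1 : (1.7320508:ℝ) * (2 - (12599211/10000000 : ℝ)) ≤ Real.sqrt 3 * (2 - (2:ℝ)^((1:ℝ)/((3:ℕ):ℝ))) :=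
    mul_le_mul s3l (by linarith) (by norm_num) (by linarith)
  have hm2 : (1.7320508:ℝ) * (2 - (12599211/10000000 : ℝ)) * 0.4188611
      ≤ Real.sqrt 3 * (2 - (2:ℝ)^((1:ℝ)/((3:ℕ):ℝ))) * (3/(4 + Real.sqrt 10)) := by
    apply mul_le_mul hm1 hrl (by norm_num)
    have : (0:ℝ) ≤ 2 - (2:ℝ)^((1:ℝ)/((3:ℕ):ℝ)) := by linarith
    positivity
  nlinarith [hterm1, hm2, hT1, hT2, hT3]

set_option maxHeartbeats 4000000 in
theorem stmt_14 (a b c s r : ℝ) (g : ℕ → ℝ)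
    (ha : a = 3) (hb : b = 1) (hc : c = Real.sqrt 10)
    (hs : s = (4 + Real.sqrt 10) / 2) (hr : r = 3 / (4 + Real.sqrt 10))
    (hg : ∀ n : ℕ, g n =
      (2 + (2 : ℝ) ^ ((1 : ℝ) / n)) * s - 3 * Real.sqrt 3 * (2 - (2 : ℝ) ^ ((1 : ℝ) / n)) * r -
        ((a ^ n + b ^ n) ^ ((1 : ℝ) / n) + (b ^ n + c ^ n) ^ ((1 : ℝ) / n) +
          (c ^ n + a ^ n) ^ ((1 : ℝ) / n))) :
    (∀ m n : ℕ, 2 ≤ m → m < n → g n < g m) ∧ ∀ n : ℕ, 3 ≤ n → g n < 0 := by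
  subst ha hb hc hs hr
  have hstep : ∀ n : ℕ, 2 ≤ n → g (n+1) < g n := by
    intro n hn
    rw [hg n, hg (n+1), show ((n+1:ℕ):ℝ) = (n:ℝ)+1 by push_cast; ring,
      add_comm ((1:ℝ)^n) (Real.sqrt 10 ^ n),
      add_comm ((1:ℝ)^(n+1)) (Real.sqrt 10 ^ (n+1))]
    by_cases h12 : 12 ≤ n
    · exact step_tail n h12
    · interval_cases n
      · -- n = 2
        have s10l : (3.16227766:ℝ) ≤ Real.sqrt 10 := sqrt10_lb
        have s10u : Real.sqrt 10 ≤ 3.16227767 := sqrt10_ub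
        have en : Real.sqrt 10 ^ (2:ℕ) = (10:ℝ)^(1:ℕ) := by
          have h := s10p 1; norm_num at h ⊢ <;> linarith [h]
        have em : Real.sqrt 10 ^ (3:ℕ) = (10:ℝ)^(1:ℕ) * Real.sqrt 10 := by
          have h := s10podd 1; norm_num at h ⊢ <;> linarith [h]
        have hcc : (((3:ℕ)):ℝ) = (((2:ℕ)):ℝ)+1 := by norm_num
        have h1 : (2828427/2000000 : ℝ) ≤ (2:ℝ)^((1:ℝ)/(((2:ℕ)):ℝ)) :=
          root_le (n := 2) (by norm_num) (by norm_num) (by norm_num)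
        have h2 : (2:ℝ)^((1:ℝ)/((((2:ℕ)):ℝ)+1)) ≤ (12599211/10000000 : ℝ) := by
          rw [← hcc]; exact le_root (n := 3) (by norm_num) (by norm_num) (by norm_num) (by norm_num)
        have h3 : ((3:ℝ)^(2:ℕ) + 1^(2:ℕ))^((1:ℝ)/(((2:ℕ)):ℝ)) ≤ (31622777/10000000 : ℝ) :=
          le_root (n := 2) (by norm_num) (by norm_num) (by positivity) (by norm_num)
        have h4 : (Real.sqrt 10^(2:ℕ) + 1^(2:ℕ))^((1:ℝ)/(((2:ℕ)):ℝ)) ≤ (4145781/1250000 : ℝ) := by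
          apply le_root (n := 2) (by norm_num) (by norm_num) (by positivity)
          rw [en]; nlinarith [s10u]
        have h5 : (Real.sqrt 10^(2:ℕ) + 3^(2:ℕ))^((1:ℝ)/(((2:ℕ)):ℝ)) ≤ (4358899/1000000 : ℝ) := by
          apply le_root (n := 2) (by norm_num) (by norm_num) (by positivity)
          rw [en]; nlinarith [s10u]
        have h6 : (30365889/10000000 : ℝ) ≤ ((3:ℝ)^(3:ℕ) + 1^(3:ℕ))^((1:ℝ)/((((2:ℕ)):ℝ)+1)) := by
          rw [← hcc]; exact root_le (n := 3) (by norm_num) (by norm_num) (by norm_num)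
        have h7 : (1997041/625000 : ℝ) ≤ (Real.sqrt 10^(3:ℕ) + 1^(3:ℕ))^((1:ℝ)/((((2:ℕ)):ℝ)+1)) := by
          rw [← hcc]
          apply root_le (n := 3) (by norm_num) (by norm_num)
          rw [em]; nlinarith [s10l]
        have h8 : (19423409/5000000 : ℝ) ≤ (Real.sqrt 10^(3:ℕ) + 3^(3:ℕ))^((1:ℝ)/((((2:ℕ)):ℝ)+1)) := by
          rw [← hcc]
          apply root_le (n := 3) (by norm_num) (by norm_num)
          rw [em]; nlinarith [s10l]
        exact gcase 2 h1 h2 (by norm_num) h3 h4 h5 h6 h7 h8 (by norm_num)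
      · -- n = 3
        have s10l : (3.16227766:ℝ) ≤ Real.sqrt 10 := sqrt10_lb
        have s10u : Real.sqrt 10 ≤ 3.16227767 := sqrt10_ub
        have en : Real.sqrt 10 ^ (3:ℕ) = (10:ℝ)^(1:ℕ) * Real.sqrt 10 := by
          have h := s10podd 1; norm_num at h ⊢ <;> linarith [h]
        have em : Real.sqrt 10 ^ (4:ℕ) = (10:ℝ)^(2:ℕ) := by
          have h := s10p 2; norm_num at h ⊢ <;> linarith [h]
        have hcc : (((4:ℕ)):ℝ) = (((3:ℕ)):ℝ)+1 := by norm_num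
        have h1 : (1259921/1000000 : ℝ) ≤ (2:ℝ)^((1:ℝ)/(((3:ℕ)):ℝ)) :=
          root_le (n := 3) (by norm_num) (by norm_num) (by norm_num)
        have h2 : (2:ℝ)^((1:ℝ)/((((3:ℕ)):ℝ)+1)) ≤ (1486509/1250000 : ℝ) := by
          rw [← hcc]; exact le_root (n := 4) (by norm_num) (by norm_num) (by norm_num) (by norm_num)
        have h3 : ((3:ℝ)^(3:ℕ) + 1^(3:ℕ))^((1:ℝ)/(((3:ℕ)):ℝ)) ≤ (3036589/1000000 : ℝ) :=
          le_root (n := 3) (by norm_num) (by norm_num) (by positivity) (by norm_num)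
        have h4 : (Real.sqrt 10^(3:ℕ) + 1^(3:ℕ))^((1:ℝ)/(((3:ℕ)):ℝ)) ≤ (31952657/10000000 : ℝ) := by
          apply le_root (n := 3) (by norm_num) (by norm_num) (by positivity)
          rw [en]; nlinarith [s10u]
        have h5 : (Real.sqrt 10^(3:ℕ) + 3^(3:ℕ))^((1:ℝ)/(((3:ℕ)):ℝ)) ≤ (38846819/10000000 : ℝ) := by
          apply le_root (n := 3) (by norm_num) (by norm_num) (by positivity)
          rw [en]; nlinarith [s10u]
        have h6 : (15046083/5000000 : ℝ) ≤ ((3:ℝ)^(4:ℕ) + 1^(4:ℕ))^((1:ℝ)/((((3:ℕ)):ℝ)+1)) := by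
          rw [← hcc]; exact root_le (n := 4) (by norm_num) (by norm_num) (by norm_num)
        have h7 : (15850769/5000000 : ℝ) ≤ (Real.sqrt 10^(4:ℕ) + 1^(4:ℕ))^((1:ℝ)/((((3:ℕ)):ℝ)+1)) := by
          rw [← hcc]
          apply root_le (n := 4) (by norm_num) (by norm_num)
          rw [em]; nlinarith [s10l]
        have h8 : (18339591/5000000 : ℝ) ≤ (Real.sqrt 10^(4:ℕ) + 3^(4:ℕ))^((1:ℝ)/((((3:ℕ)):ℝ)+1)) := by
          rw [← hcc]
          apply root_le (n := 4) (by norm_num) (by norm_num)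
          rw [em]; nlinarith [s10l]
        exact gcase 3 h1 h2 (by norm_num) h3 h4 h5 h6 h7 h8 (by norm_num)
      · -- n = 4
        have s10l : (3.16227766:ℝ) ≤ Real.sqrt 10 := sqrt10_lb
        have s10u : Real.sqrt 10 ≤ 3.16227767 := sqrt10_ub
        have en : Real.sqrt 10 ^ (4:ℕ) = (10:ℝ)^(2:ℕ) := by
          have h := s10p 2; norm_num at h ⊢ <;> linarith [h]
        have em : Real.sqrt 10 ^ (5:ℕ) = (10:ℝ)^(2:ℕ) * Real.sqrt 10 := by
          have h := s10podd 2; norm_num at h ⊢ <;> linarith [h]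
        have hcc : (((5:ℕ)):ℝ) = (((4:ℕ)):ℝ)+1 := by norm_num
        have h1 : (11892071/10000000 : ℝ) ≤ (2:ℝ)^((1:ℝ)/(((4:ℕ)):ℝ)) :=
          root_le (n := 4) (by norm_num) (by norm_num) (by norm_num)
        have h2 : (2:ℝ)^((1:ℝ)/((((4:ℕ)):ℝ)+1)) ≤ (1435873/1250000 : ℝ) := by
          rw [← hcc]; exact le_root (n := 5) (by norm_num) (by norm_num) (by norm_num) (by norm_num)
        have h3 : ((3:ℝ)^(4:ℕ) + 1^(4:ℕ))^((1:ℝ)/(((4:ℕ)):ℝ)) ≤ (30092167/10000000 : ℝ) :=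
          le_root (n := 4) (by norm_num) (by norm_num) (by positivity) (by norm_num)
        have h4 : (Real.sqrt 10^(4:ℕ) + 1^(4:ℕ))^((1:ℝ)/(((4:ℕ)):ℝ)) ≤ (31701539/10000000 : ℝ) := by
          apply le_root (n := 4) (by norm_num) (by norm_num) (by positivity)
          rw [en]; nlinarith [s10u]
        have h5 : (Real.sqrt 10^(4:ℕ) + 3^(4:ℕ))^((1:ℝ)/(((4:ℕ)):ℝ)) ≤ (36679183/10000000 : ℝ) := by
          apply le_root (n := 4) (by norm_num) (by norm_num) (by positivity)
          rw [en]; nlinarith [s10u]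
        have h6 : (600493/200000 : ℝ) ≤ ((3:ℝ)^(5:ℕ) + 1^(5:ℕ))^((1:ℝ)/((((4:ℕ)):ℝ)+1)) := by
          rw [← hcc]; exact root_le (n := 5) (by norm_num) (by norm_num) (by norm_num)
        have h7 : (31642751/10000000 : ℝ) ≤ (Real.sqrt 10^(5:ℕ) + 1^(5:ℕ))^((1:ℝ)/((((4:ℕ)):ℝ)+1)) := by
          rw [← hcc]
          apply root_le (n := 5) (by norm_num) (by norm_num)
          rw [em]; nlinarith [s10l]
        have h8 : (35441961/10000000 : ℝ) ≤ (Real.sqrt 10^(5:ℕ) + 3^(5:ℕ))^((1:ℝ)/((((4:ℕ)):ℝ)+1)) := by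
          rw [← hcc]
          apply root_le (n := 5) (by norm_num) (by norm_num)
          rw [em]; nlinarith [s10l]
        exact gcase 4 h1 h2 (by norm_num) h3 h4 h5 h6 h7 h8 (by norm_num)
      · -- n = 5
        have s10l : (3.16227766:ℝ) ≤ Real.sqrt 10 := sqrt10_lb
        have s10u : Real.sqrt 10 ≤ 3.16227767 := sqrt10_ub
        have en : Real.sqrt 10 ^ (5:ℕ) = (10:ℝ)^(2:ℕ) * Real.sqrt 10 := by
          have h := s10podd 2; norm_num at h ⊢ <;> linarith [h]
        have em : Real.sqrt 10 ^ (6:ℕ) = (10:ℝ)^(3:ℕ) := by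
          have h := s10p 3; norm_num at h ⊢ <;> linarith [h]
        have hcc : (((6:ℕ)):ℝ) = (((5:ℕ)):ℝ)+1 := by norm_num
        have h1 : (11486983/10000000 : ℝ) ≤ (2:ℝ)^((1:ℝ)/(((5:ℕ)):ℝ)) :=
          root_le (n := 5) (by norm_num) (by norm_num) (by norm_num)
        have h2 : (2:ℝ)^((1:ℝ)/((((5:ℕ)):ℝ)+1)) ≤ (11224621/10000000 : ℝ) := by
          rw [← hcc]; exact le_root (n := 6) (by norm_num) (by norm_num) (by norm_num) (by norm_num)
        have h3 : ((3:ℝ)^(5:ℕ) + 1^(5:ℕ))^((1:ℝ)/(((5:ℕ)):ℝ)) ≤ (30024651/10000000 : ℝ) :=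
          le_root (n := 5) (by norm_num) (by norm_num) (by positivity) (by norm_num)
        have h4 : (Real.sqrt 10^(5:ℕ) + 1^(5:ℕ))^((1:ℝ)/(((5:ℕ)):ℝ)) ≤ (247209/78125 : ℝ) := by
          apply le_root (n := 5) (by norm_num) (by norm_num) (by positivity)
          rw [en]; nlinarith [s10u]
        have h5 : (Real.sqrt 10^(5:ℕ) + 3^(5:ℕ))^((1:ℝ)/(((5:ℕ)):ℝ)) ≤ (17720981/5000000 : ℝ) := by
          apply le_root (n := 5) (by norm_num) (by norm_num) (by positivity)
          rw [en]; nlinarith [s10u]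
        have h6 : (15003427/5000000 : ℝ) ≤ ((3:ℝ)^(6:ℕ) + 1^(6:ℕ))^((1:ℝ)/((((5:ℕ)):ℝ)+1)) := by
          rw [← hcc]; exact root_le (n := 6) (by norm_num) (by norm_num) (by norm_num)
        have h7 : (7907011/2500000 : ℝ) ≤ (Real.sqrt 10^(6:ℕ) + 1^(6:ℕ))^((1:ℝ)/((((5:ℕ)):ℝ)+1)) := by
          rw [← hcc]
          apply root_le (n := 6) (by norm_num) (by norm_num)
          rw [em]; nlinarith [s10l]
        have h8 : (8661089/2500000 : ℝ) ≤ (Real.sqrt 10^(6:ℕ) + 3^(6:ℕ))^((1:ℝ)/((((5:ℕ)):ℝ)+1)) := by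
          rw [← hcc]
          apply root_le (n := 6) (by norm_num) (by norm_num)
          rw [em]; nlinarith [s10l]
        exact gcase 5 h1 h2 (by norm_num) h3 h4 h5 h6 h7 h8 (by norm_num)
      · -- n = 6
        have s10l : (3.16227766:ℝ) ≤ Real.sqrt 10 := sqrt10_lb
        have s10u : Real.sqrt 10 ≤ 3.16227767 := sqrt10_ub
        have en : Real.sqrt 10 ^ (6:ℕ) = (10:ℝ)^(3:ℕ) := by
          have h := s10p 3; norm_num at h ⊢ <;> linarith [h]
        have em : Real.sqrt 10 ^ (7:ℕ) = (10:ℝ)^(3:ℕ) * Real.sqrt 10 := by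
          have h := s10podd 3; norm_num at h ⊢ <;> linarith [h]
        have hcc : (((7:ℕ)):ℝ) = (((6:ℕ)):ℝ)+1 := by norm_num
        have h1 : (561231/500000 : ℝ) ≤ (2:ℝ)^((1:ℝ)/(((6:ℕ)):ℝ)) :=
          root_le (n := 6) (by norm_num) (by norm_num) (by norm_num)
        have h2 : (2:ℝ)^((1:ℝ)/((((6:ℕ)):ℝ)+1)) ≤ (86257/78125 : ℝ) := by
          rw [← hcc]; exact le_root (n := 7) (by norm_num) (by norm_num) (by norm_num) (by norm_num)
        have h3 : ((3:ℝ)^(6:ℕ) + 1^(6:ℕ))^((1:ℝ)/(((6:ℕ)):ℝ)) ≤ (6001371/2000000 : ℝ) :=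
          le_root (n := 6) (by norm_num) (by norm_num) (by positivity) (by norm_num)
        have h4 : (Real.sqrt 10^(6:ℕ) + 1^(6:ℕ))^((1:ℝ)/(((6:ℕ)):ℝ)) ≤ (6325609/2000000 : ℝ) := by
          apply le_root (n := 6) (by norm_num) (by norm_num) (by positivity)
          rw [en]; nlinarith [s10u]
        have h5 : (Real.sqrt 10^(6:ℕ) + 3^(6:ℕ))^((1:ℝ)/(((6:ℕ)):ℝ)) ≤ (34644357/10000000 : ℝ) := by
          apply le_root (n := 6) (by norm_num) (by norm_num) (by positivity)
          rw [en]; nlinarith [s10u]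
        have h6 : (30001959/10000000 : ℝ) ≤ ((3:ℝ)^(7:ℕ) + 1^(7:ℕ))^((1:ℝ)/((((6:ℕ)):ℝ)+1)) := by
          rw [← hcc]; exact root_le (n := 7) (by norm_num) (by norm_num) (by norm_num)
        have h7 : (7906051/2500000 : ℝ) ≤ (Real.sqrt 10^(7:ℕ) + 1^(7:ℕ))^((1:ℝ)/((((6:ℕ)):ℝ)+1)) := by
          rw [← hcc]
          apply root_le (n := 7) (by norm_num) (by norm_num)
          rw [em]; nlinarith [s10l]
        have h8 : (34088947/10000000 : ℝ) ≤ (Real.sqrt 10^(7:ℕ) + 3^(7:ℕ))^((1:ℝ)/((((6:ℕ)):ℝ)+1)) := by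
          rw [← hcc]
          apply root_le (n := 7) (by norm_num) (by norm_num)
          rw [em]; nlinarith [s10l]
        exact gcase 6 h1 h2 (by norm_num) h3 h4 h5 h6 h7 h8 (by norm_num)
      · -- n = 7
        have s10l : (3.16227766:ℝ) ≤ Real.sqrt 10 := sqrt10_lb
        have s10u : Real.sqrt 10 ≤ 3.16227767 := sqrt10_ub
        have en : Real.sqrt 10 ^ (7:ℕ) = (10:ℝ)^(3:ℕ) * Real.sqrt 10 := by
          have h := s10podd 3; norm_num at h ⊢ <;> linarith [h]
        have em : Real.sqrt 10 ^ (8:ℕ) = (10:ℝ)^(4:ℕ) := by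
          have h := s10p 4; norm_num at h ⊢ <;> linarith [h]
        have hcc : (((8:ℕ)):ℝ) = (((7:ℕ)):ℝ)+1 := by norm_num
        have h1 : (2208179/2000000 : ℝ) ≤ (2:ℝ)^((1:ℝ)/(((7:ℕ)):ℝ)) :=
          root_le (n := 7) (by norm_num) (by norm_num) (by norm_num)
        have h2 : (2:ℝ)^((1:ℝ)/((((7:ℕ)):ℝ)+1)) ≤ (5452539/5000000 : ℝ) := by
          rw [← hcc]; exact le_root (n := 8) (by norm_num) (by norm_num) (by norm_num) (by norm_num)
        have h3 : ((3:ℝ)^(7:ℕ) + 1^(7:ℕ))^((1:ℝ)/(((7:ℕ)):ℝ)) ≤ (750049/250000 : ℝ) :=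
          le_root (n := 7) (by norm_num) (by norm_num) (by positivity) (by norm_num)
        have h4 : (Real.sqrt 10^(7:ℕ) + 1^(7:ℕ))^((1:ℝ)/(((7:ℕ)):ℝ)) ≤ (6324841/2000000 : ℝ) := by
          apply le_root (n := 7) (by norm_num) (by norm_num) (by positivity)
          rw [en]; nlinarith [s10u]
        have h5 : (Real.sqrt 10^(7:ℕ) + 3^(7:ℕ))^((1:ℝ)/(((7:ℕ)):ℝ)) ≤ (8522237/2500000 : ℝ) := by
          apply le_root (n := 7) (by norm_num) (by norm_num) (by positivity)
          rw [en]; nlinarith [s10u]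
        have h6 : (30000571/10000000 : ℝ) ≤ ((3:ℝ)^(8:ℕ) + 1^(8:ℕ))^((1:ℝ)/((((7:ℕ)):ℝ)+1)) := by
          rw [← hcc]; exact root_le (n := 8) (by norm_num) (by norm_num) (by norm_num)
        have h7 : (31623171/10000000 : ℝ) ≤ (Real.sqrt 10^(8:ℕ) + 1^(8:ℕ))^((1:ℝ)/((((7:ℕ)):ℝ)+1)) := by
          rw [← hcc]
          apply root_le (n := 8) (by norm_num) (by norm_num)
          rw [em]; nlinarith [s10l]
        have h8 : (6736213/2000000 : ℝ) ≤ (Real.sqrt 10^(8:ℕ) + 3^(8:ℕ))^((1:ℝ)/((((7:ℕ)):ℝ)+1)) := by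
          rw [← hcc]
          apply root_le (n := 8) (by norm_num) (by norm_num)
          rw [em]; nlinarith [s10l]
        exact gcase 7 h1 h2 (by norm_num) h3 h4 h5 h6 h7 h8 (by norm_num)
      · -- n = 8
        have s10l : (3.16227766:ℝ) ≤ Real.sqrt 10 := sqrt10_lb
        have s10u : Real.sqrt 10 ≤ 3.16227767 := sqrt10_ub
        have en : Real.sqrt 10 ^ (8:ℕ) = (10:ℝ)^(4:ℕ) := by
          have h := s10p 4; norm_num at h ⊢ <;> linarith [h]
        have em : Real.sqrt 10 ^ (9:ℕ) = (10:ℝ)^(4:ℕ) * Real.sqrt 10 := by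
          have h := s10podd 4; norm_num at h ⊢ <;> linarith [h]
        have hcc : (((9:ℕ)):ℝ) = (((8:ℕ)):ℝ)+1 := by norm_num
        have h1 : (10905077/10000000 : ℝ) ≤ (2:ℝ)^((1:ℝ)/(((8:ℕ)):ℝ)) :=
          root_le (n := 8) (by norm_num) (by norm_num) (by norm_num)
        have h2 : (2:ℝ)^((1:ℝ)/((((8:ℕ)):ℝ)+1)) ≤ (5400299/5000000 : ℝ) := by
          rw [← hcc]; exact le_root (n := 9) (by norm_num) (by norm_num) (by norm_num) (by norm_num)
        have h3 : ((3:ℝ)^(8:ℕ) + 1^(8:ℕ))^((1:ℝ)/(((8:ℕ)):ℝ)) ≤ (7500143/2500000 : ℝ) :=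
          le_root (n := 8) (by norm_num) (by norm_num) (by positivity) (by norm_num)
        have h4 : (Real.sqrt 10^(8:ℕ) + 1^(8:ℕ))^((1:ℝ)/(((8:ℕ)):ℝ)) ≤ (7905793/2500000 : ℝ) := by
          apply le_root (n := 8) (by norm_num) (by norm_num) (by positivity)
          rw [en]; nlinarith [s10u]
        have h5 : (Real.sqrt 10^(8:ℕ) + 3^(8:ℕ))^((1:ℝ)/(((8:ℕ)):ℝ)) ≤ (16840533/5000000 : ℝ) := by
          apply le_root (n := 8) (by norm_num) (by norm_num) (by positivity)
          rw [en]; nlinarith [s10u]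
        have h6 : (30000169/10000000 : ℝ) ≤ ((3:ℝ)^(9:ℕ) + 1^(9:ℕ))^((1:ℝ)/((((8:ℕ)):ℝ)+1)) := by
          rw [← hcc]; exact root_le (n := 9) (by norm_num) (by norm_num) (by norm_num)
        have h7 : (31622887/10000000 : ℝ) ≤ (Real.sqrt 10^(9:ℕ) + 1^(9:ℕ))^((1:ℝ)/((((8:ℕ)):ℝ)+1)) := by
          rw [← hcc]
          apply root_le (n := 9) (by norm_num) (by norm_num)
          rw [em]; nlinarith [s10l]
        have h8 : (33369661/10000000 : ℝ) ≤ (Real.sqrt 10^(9:ℕ) + 3^(9:ℕ))^((1:ℝ)/((((8:ℕ)):ℝ)+1)) := by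
          rw [← hcc]
          apply root_le (n := 9) (by norm_num) (by norm_num)
          rw [em]; nlinarith [s10l]
        exact gcase 8 h1 h2 (by norm_num) h3 h4 h5 h6 h7 h8 (by norm_num)
      · -- n = 9
        have s10l : (3.16227766:ℝ) ≤ Real.sqrt 10 := sqrt10_lb
        have s10u : Real.sqrt 10 ≤ 3.16227767 := sqrt10_ub
        have en : Real.sqrt 10 ^ (9:ℕ) = (10:ℝ)^(4:ℕ) * Real.sqrt 10 := by
          have h := s10podd 4; norm_num at h ⊢ <;> linarith [h]
        have em : Real.sqrt 10 ^ (10:ℕ) = (10:ℝ)^(5:ℕ) := by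
          have h := s10p 5; norm_num at h ⊢ <;> linarith [h]
        have hcc : (((10:ℕ)):ℝ) = (((9:ℕ)):ℝ)+1 := by norm_num
        have h1 : (10800597/10000000 : ℝ) ≤ (2:ℝ)^((1:ℝ)/(((9:ℕ)):ℝ)) :=
          root_le (n := 9) (by norm_num) (by norm_num) (by norm_num)
        have h2 : (2:ℝ)^((1:ℝ)/((((9:ℕ)):ℝ)+1)) ≤ (2143547/2000000 : ℝ) := by
          rw [← hcc]; exact le_root (n := 10) (by norm_num) (by norm_num) (by norm_num) (by norm_num)
        have h3 : ((3:ℝ)^(9:ℕ) + 1^(9:ℕ))^((1:ℝ)/(((9:ℕ)):ℝ)) ≤ (3000017/1000000 : ℝ) :=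
          le_root (n := 9) (by norm_num) (by norm_num) (by positivity) (by norm_num)
        have h4 : (Real.sqrt 10^(9:ℕ) + 1^(9:ℕ))^((1:ℝ)/(((9:ℕ)):ℝ)) ≤ (3952861/1250000 : ℝ) := by
          apply le_root (n := 9) (by norm_num) (by norm_num) (by positivity)
          rw [en]; nlinarith [s10u]
        have h5 : (Real.sqrt 10^(9:ℕ) + 3^(9:ℕ))^((1:ℝ)/(((9:ℕ)):ℝ)) ≤ (16684831/5000000 : ℝ) := by
          apply le_root (n := 9) (by norm_num) (by norm_num) (by positivity)
          rw [en]; nlinarith [s10u]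
        have h6 : (600001/200000 : ℝ) ≤ ((3:ℝ)^(10:ℕ) + 1^(10:ℕ))^((1:ℝ)/((((9:ℕ)):ℝ)+1)) := by
          rw [← hcc]; exact root_le (n := 10) (by norm_num) (by norm_num) (by norm_num)
        have h7 : (3952851/1250000 : ℝ) ≤ (Real.sqrt 10^(10:ℕ) + 1^(10:ℕ))^((1:ℝ)/((((9:ℕ)):ℝ)+1)) := by
          rw [← hcc]
          apply root_le (n := 10) (by norm_num) (by norm_num)
          rw [em]; nlinarith [s10l]
        have h8 : (16562393/5000000 : ℝ) ≤ (Real.sqrt 10^(10:ℕ) + 3^(10:ℕ))^((1:ℝ)/((((9:ℕ)):ℝ)+1)) := by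
          rw [← hcc]
          apply root_le (n := 10) (by norm_num) (by norm_num)
          rw [em]; nlinarith [s10l]
        exact gcase 9 h1 h2 (by norm_num) h3 h4 h5 h6 h7 h8 (by norm_num)
      · -- n = 10
        have s10l : (3.16227766:ℝ) ≤ Real.sqrt 10 := sqrt10_lb
        have s10u : Real.sqrt 10 ≤ 3.16227767 := sqrt10_ub
        have en : Real.sqrt 10 ^ (10:ℕ) = (10:ℝ)^(5:ℕ) := by
          have h := s10p 5; norm_num at h ⊢ <;> linarith [h]
        have em : Real.sqrt 10 ^ (11:ℕ) = (10:ℝ)^(5:ℕ) * Real.sqrt 10 := by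
          have h := s10podd 5; norm_num at h ⊢ <;> linarith [h]
        have hcc : (((11:ℕ)):ℝ) = (((10:ℕ)):ℝ)+1 := by norm_num
        have h1 : (5358867/5000000 : ℝ) ≤ (2:ℝ)^((1:ℝ)/(((10:ℕ)):ℝ)) :=
          root_le (n := 10) (by norm_num) (by norm_num) (by norm_num)
        have h2 : (2:ℝ)^((1:ℝ)/((((10:ℕ)):ℝ)+1)) ≤ (10650411/10000000 : ℝ) := by
          rw [← hcc]; exact le_root (n := 11) (by norm_num) (by norm_num) (by norm_num) (by norm_num)
        have h3 : ((3:ℝ)^(10:ℕ) + 1^(10:ℕ))^((1:ℝ)/(((10:ℕ)):ℝ)) ≤ (30000051/10000000 : ℝ) :=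
          le_root (n := 10) (by norm_num) (by norm_num) (by positivity) (by norm_num)
        have h4 : (Real.sqrt 10^(10:ℕ) + 1^(10:ℕ))^((1:ℝ)/(((10:ℕ)):ℝ)) ≤ (31622809/10000000 : ℝ) := by
          apply le_root (n := 10) (by norm_num) (by norm_num) (by positivity)
          rw [en]; nlinarith [s10u]
        have h5 : (Real.sqrt 10^(10:ℕ) + 3^(10:ℕ))^((1:ℝ)/(((10:ℕ)):ℝ)) ≤ (33124787/10000000 : ℝ) := by
          apply le_root (n := 10) (by norm_num) (by norm_num) (by positivity)
          rw [en]; nlinarith [s10u]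
        have h6 : (6000003/2000000 : ℝ) ≤ ((3:ℝ)^(11:ℕ) + 1^(11:ℕ))^((1:ℝ)/((((10:ℕ)):ℝ)+1)) := by
          rw [← hcc]; exact root_le (n := 11) (by norm_num) (by norm_num) (by norm_num)
        have h7 : (6324557/2000000 : ℝ) ≤ (Real.sqrt 10^(11:ℕ) + 1^(11:ℕ))^((1:ℝ)/((((10:ℕ)):ℝ)+1)) := by
          rw [← hcc]
          apply root_le (n := 11) (by norm_num) (by norm_num)
          rw [em]; nlinarith [s10l]
        have h8 : (3292771/1000000 : ℝ) ≤ (Real.sqrt 10^(11:ℕ) + 3^(11:ℕ))^((1:ℝ)/((((10:ℕ)):ℝ)+1)) := by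
          rw [← hcc]
          apply root_le (n := 11) (by norm_num) (by norm_num)
          rw [em]; nlinarith [s10l]
        exact gcase 10 h1 h2 (by norm_num) h3 h4 h5 h6 h7 h8 (by norm_num)
      · -- n = 11
        have s10l : (3.16227766:ℝ) ≤ Real.sqrt 10 := sqrt10_lb
        have s10u : Real.sqrt 10 ≤ 3.16227767 := sqrt10_ub
        have en : Real.sqrt 10 ^ (11:ℕ) = (10:ℝ)^(5:ℕ) * Real.sqrt 10 := by
          have h := s10podd 5; norm_num at h ⊢ <;> linarith [h]
        have em : Real.sqrt 10 ^ (12:ℕ) = (10:ℝ)^(6:ℕ) := by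
          have h := s10p 6; norm_num at h ⊢ <;> linarith [h]
        have hcc : (((12:ℕ)):ℝ) = (((11:ℕ)):ℝ)+1 := by norm_num
        have h1 : (1065041/1000000 : ℝ) ≤ (2:ℝ)^((1:ℝ)/(((11:ℕ)):ℝ)) :=
          root_le (n := 11) (by norm_num) (by norm_num) (by norm_num)
        have h2 : (2:ℝ)^((1:ℝ)/((((11:ℕ)):ℝ)+1)) ≤ (10594631/10000000 : ℝ) := by
          rw [← hcc]; exact le_root (n := 12) (by norm_num) (by norm_num) (by norm_num) (by norm_num)
        have h3 : ((3:ℝ)^(11:ℕ) + 1^(11:ℕ))^((1:ℝ)/(((11:ℕ)):ℝ)) ≤ (1875001/625000 : ℝ) :=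
          le_root (n := 11) (by norm_num) (by norm_num) (by positivity) (by norm_num)
        have h4 : (Real.sqrt 10^(11:ℕ) + 1^(11:ℕ))^((1:ℝ)/(((11:ℕ)):ℝ)) ≤ (15811393/5000000 : ℝ) := by
          apply le_root (n := 11) (by norm_num) (by norm_num) (by positivity)
          rw [en]; nlinarith [s10u]
        have h5 : (Real.sqrt 10^(11:ℕ) + 3^(11:ℕ))^((1:ℝ)/(((11:ℕ)):ℝ)) ≤ (32927711/10000000 : ℝ) := by
          apply le_root (n := 11) (by norm_num) (by norm_num) (by positivity)
          rw [en]; nlinarith [s10u]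
        have h6 : (7500001/2500000 : ℝ) ≤ ((3:ℝ)^(12:ℕ) + 1^(12:ℕ))^((1:ℝ)/((((11:ℕ)):ℝ)+1)) := by
          rw [← hcc]; exact root_le (n := 12) (by norm_num) (by norm_num) (by norm_num)
        have h7 : (31622779/10000000 : ℝ) ≤ (Real.sqrt 10^(12:ℕ) + 1^(12:ℕ))^((1:ℝ)/((((11:ℕ)):ℝ)+1)) := by
          rw [← hcc]
          apply root_le (n := 12) (by norm_num) (by norm_num)
          rw [em]; nlinarith [s10l]
        have h8 : (819153/250000 : ℝ) ≤ (Real.sqrt 10^(12:ℕ) + 3^(12:ℕ))^((1:ℝ)/((((11:ℕ)):ℝ)+1)) := by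
          rw [← hcc]
          apply root_le (n := 12) (by norm_num) (by norm_num)
          rw [em]; nlinarith [s10l]
        exact gcase 11 h1 h2 (by norm_num) h3 h4 h5 h6 h7 h8 (by norm_num)
  have hchain : ∀ n k : ℕ, 2 ≤ n → g (n+k+1) < g n := by
    intro n k hn
    induction k with
    | zero => simpa using hstep n hn
    | succ k ih =>
      have h2 : 2 ≤ n+k+1 := by omega
      have h3 := hstep (n+k+1) h2
      have he : n+(k+1)+1 = (n+k+1)+1 := by omega
      rw [he]
      exact lt_trans h3 ih
  constructor
  · intro m n hm hlt
    obtain ⟨k, rfl⟩ : ∃ k, n = m+k+1 := ⟨n-m-1, by omega⟩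
    exact hchain m k hm
  · intro n hn
    have hg3 : g 3 < 0 := by
      rw [hg 3, add_comm ((1:ℝ)^(3:ℕ)) (Real.sqrt 10 ^ (3:ℕ))]
      exact gval3
    rcases eq_or_lt_of_le hn with h | h
    · rw [← h]; exact hg3
    · obtain ⟨k, rfl⟩ : ∃ k, n = 3+k+1 := ⟨n-4, by omega⟩
      exact lt_trans (hchain 3 k (by norm_num)) hg3
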